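/- Consider the 1D wave equation y_tt - y_xx = 0 on (0,T)×(0,1) with boundary controls y(t,0)=u_0(t), y(t,1)=u_1(t) and initial data (y_0^0, 0) with y_0^0 a positive constant. For any T > 1 and positive constant target y_1^0, the controls u_0(t) = y_0^0 for t ∈ [0,1), u_0(t) = (y_1^0 - y_0^0)(t-1)/(T-1) + y_0^0 for t ∈ [1,T], and u_1(t) = (y_1^0 - y_0^0) t/(T-1) + y_0^0 for t ∈ [0,T-1), u_1(t) = y_1^0 for t ∈ [T-1,T], yield the solution y(t,x) = f(x+t) where f(ξ) = y_0^0 for ξ ∈ [0,1), f(ξ) = (y_1^0 - y_0^0)(ξ-1)/(T-1) + y_0^0 for ξ ∈ [1,T), f(ξ) = y_1^0 for ξ ∈ [T,T+1]; this solution satisfies the wave equation, the boundary conditions, initial conditions y(0,x)=y_0^0, y_t(0,x)=0, and final conditions y(T,x)=y_1^0, y_t(T,x)=0, and is nonnegative. -/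

import Mathlib

private lemma lin_nonneg (T y00 y10 s : ℝ) (hT : 1 < T) (h0 : 0 < y00) (h1 : 0 < y10)
    (hs : 0 ≤ s) (hs' : s ≤ T - 1) : 0 ≤ (y10 - y00) * s / (T - 1) + y00 := by
  have hd : (0:ℝ) < T - 1 := by linarith
  have hq : ((y10 - y00) * s / (T - 1)) * (T - 1) = (y10 - y00) * s :=
    div_mul_cancel₀ _ (ne_of_gt hd)
  rcases le_total y00 y10 with h | h
  · have : 0 ≤ (y10 - y00) * s / (T - 1) := div_nonneg (mul_nonneg (by linarith) hs) hd.le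
    linarith
  · nlinarith [mul_le_mul_of_nonpos_left hs' (by linarith : y10 - y00 ≤ 0)]

/-- Constrained controllability of the 1D wave equation between positive constant steady
states in any time `T > 1`: the explicit traveling wave `y(t,x) = f(x+t)` with the explicit
nonnegative boundary controls `u₀, u₁` solves the wave equation, satisfies the boundary,
initial and final conditions, and stays nonnegative. -/
theorem stmt1 (T y00 y10 : ℝ) (hT : 1 < T) (h0 : 0 < y00) (h1 : 0 < y10)
    (f : ℝ → ℝ)
    (hf : ∀ ξ : ℝ, f ξ =
      if ξ < 1 then y00 else if ξ < T then (y10 - y00) * (ξ - 1) / (T - 1) + y00 else y10)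
    (u0 u1 : ℝ → ℝ)
    (hu0 : ∀ t : ℝ, u0 t = if t < 1 then y00 else (y10 - y00) * (t - 1) / (T - 1) + y00)
    (hu1 : ∀ t : ℝ, u1 t = if t < T - 1 then (y10 - y00) * t / (T - 1) + y00 else y10)
    (y : ℝ → ℝ → ℝ) (hy : ∀ t x : ℝ, y t x = f (x + t)) :
    -- the wave equation `y_tt = y_xx` (traveling-wave sense)
    (∀ t x : ℝ, deriv (deriv (fun s : ℝ => y s x)) t = deriv (deriv (fun z : ℝ => y t z)) x) ∧
    -- boundary conditions
    (∀ t ∈ Set.Icc (0 : ℝ) T, y t 0 = u0 t ∧ y t 1 = u1 t) ∧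
    -- nonnegativity of the controls
    (∀ t ∈ Set.Icc (0 : ℝ) T, 0 ≤ u0 t ∧ 0 ≤ u1 t) ∧
    -- initial conditions `(y(0,·), y_t(0,·)) = (y00, 0)`
    (∀ x ∈ Set.Icc (0 : ℝ) 1, y 0 x = y00) ∧
    (∀ x ∈ Set.Ioo (0 : ℝ) 1, deriv (fun s : ℝ => y s x) 0 = 0) ∧
    -- final conditions `(y(T,·), y_t(T,·)) = (y10, 0)`
    (∀ x ∈ Set.Icc (0 : ℝ) 1, y T x = y10) ∧
    (∀ x ∈ Set.Ioo (0 : ℝ) 1, deriv (fun s : ℝ => y s x) T = 0) ∧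
    -- nonnegativity of the state
    (∀ t ∈ Set.Icc (0 : ℝ) T, ∀ x ∈ Set.Icc (0 : ℝ) 1, 0 ≤ y t x) := by
  have hd : (0:ℝ) < T - 1 := by linarith
  refine ⟨?_, ?_, ?_, ?_, ?_, ?_, ?_, ?_⟩
  · -- wave equation
    intro t x
    have ht : (fun s : ℝ => y s x) = fun s => f (x + s) := by funext s; exact hy s x
    have hxw : (fun z : ℝ => y t z) = fun z => f (z + t) := by funext z; exact hy t z
    rw [ht, hxw]
    have h1' : deriv (fun s : ℝ => f (x + s)) = fun s => deriv f (x + s) := by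
      funext s; exact deriv_comp_const_add f x s
    have h2' : deriv (fun z : ℝ => f (z + t)) = fun z => deriv f (z + t) := by
      funext z; exact deriv_comp_add_const f t z
    rw [h1', h2', deriv_comp_const_add (deriv f) x t, deriv_comp_add_const (deriv f) t x]
  · -- boundary conditions
    intro t ht
    obtain ⟨ht0, htT⟩ := ht
    constructor
    · rw [hy, hu0, zero_add, hf]
      rcases lt_or_ge t 1 with h | h
      · simp [h]
      · rcases lt_or_ge t T with h' | h'
        · simp [not_lt.2 h, h']
        · have htT' : t = T := le_antisymm htT h'
          simp only [not_lt.2 h, if_false, not_lt.2 h', if_false]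
          subst htT'
          field_simp
          ring
    · rw [hy, hu1, hf]
      have : ¬ (1 + t < 1) := by linarith
      rcases lt_or_ge t (T - 1) with h | h
      · have h' : 1 + t < T := by linarith
        simp only [this, if_false, h, if_true, h', if_true]
        ring_nf
      · have h' : ¬ (1 + t < T) := by linarith
        simp [this, h', not_lt.2 h]
  · -- control nonnegativity
    intro t ht
    obtain ⟨ht0, htT⟩ := ht
    constructor
    · rw [hu0]
      rcases lt_or_ge t 1 with h | h
      · simp [h]; linarith
      · simp only [not_lt.2 h, if_false]
        exact lin_nonneg T y00 y10 (t - 1) hT h0 h1 (by linarith) (by linarith)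
    · rw [hu1]
      rcases lt_or_ge t (T - 1) with h | h
      · simp only [h, if_true]
        exact lin_nonneg T y00 y10 t hT h0 h1 ht0 (by linarith)
      · simp [not_lt.2 h]; linarith
  · -- initial condition
    intro x hx
    obtain ⟨hx0, hx1⟩ := hx
    rw [hy, add_zero, hf]
    rcases lt_or_ge x 1 with h | h
    · simp [h]
    · have hx1' : x = 1 := le_antisymm hx1 h
      subst hx1'
      simp only [not_lt.2 h, if_false, if_pos hT]
      field_simp
      ring
  · -- initial velocity
    intro x hx
    obtain ⟨hx0, hx1⟩ := hx
    have ht : (fun s : ℝ => y s x) = fun s => f (x + s) := by funext s; exact hy s x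
    rw [ht, deriv_comp_const_add f x 0, add_zero]
    have hev : f =ᶠ[nhds x] fun _ => y00 := by
      filter_upwards [Iio_mem_nhds hx1] with ξ hξ
      rw [hf]; simp [show ξ < 1 from hξ]
    rw [hev.deriv_eq, deriv_const]
  · -- final condition
    intro x hx
    obtain ⟨hx0, hx1⟩ := hx
    rw [hy, hf]
    have h1' : ¬ (x + T < 1) := by linarith
    have h2' : ¬ (x + T < T) := by linarith
    rcases eq_or_lt_of_le hx0 with h | h
    · simp [← h, h2']
      intro h'; linarith
    · simp [h1', h2']
  · -- final velocity
    intro x hx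
    obtain ⟨hx0, hx1⟩ := hx
    have ht : (fun s : ℝ => y s x) = fun s => f (x + s) := by funext s; exact hy s x
    rw [ht, deriv_comp_const_add f x T]
    have hev : f =ᶠ[nhds (x + T)] fun _ => y10 := by
      filter_upwards [Ioi_mem_nhds (by linarith : T < x + T)] with ξ hξ
      rw [hf]
      have : ¬ ξ < 1 := by simp at hξ; linarith
      have h2 : ¬ ξ < T := by simp at hξ; linarith
      simp [this, h2]
    rw [hev.deriv_eq, deriv_const]
  · -- state nonnegativity
    intro t ht x hx
    obtain ⟨ht0, htT⟩ := ht
    obtain ⟨hx0, hx1⟩ := hx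
    rw [hy, hf]
    rcases lt_or_ge (x + t) 1 with h | h
    · simp [h]; linarith
    · rcases lt_or_ge (x + t) T with h' | h'
      · simp only [not_lt.2 h, if_false, h', if_true]
        exact lin_nonneg T y00 y10 (x + t - 1) hT h0 h1 (by linarith) (by linarith)
      · simp [not_lt.2 h, not_lt.2 h']; linarith
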